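/- Let N ≥ 3 be an integer, let φ : [0,∞) → ℝ be continuously differentiable with φ(s) ≥ φ₀ > 0 and φ'(s) ≤ 0 for all s ≥ 0, and let Φ(s) = ∫₀^s φ(τ) dτ. Then for every s ∈ ℝ and every b > 0, Φ((s² + b²)/2) − (1/N)·φ((s² + b²)/2)·b² ≥ Φ(s²/2) + ((N−2)·φ₀/(2N))·b²; in particular Φ((s² + b²)/2) − (1/N)·φ((s² + b²)/2)·b² > Φ(s²/2). -/

import Mathlib

open Set intervalIntegral

/-- Quantitative form of inequality (6.1): for `φ` of class `C¹` on `[0,∞)`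
with `φ ≥ φ₀ > 0` and `φ' ≤ 0`, for every `s ∈ ℝ` and `b > 0`,
`Φ((s²+b²)/2) − (1/N)φ((s²+b²)/2)b² ≥ Φ(s²/2) + ((N−2)φ₀/(2N))b²
 > Φ(s²/2)`. -/
theorem pohozaev_integrand_lower_bound
    (N : ℕ) (hN : 3 ≤ N)
    (φ φ' : ℝ → ℝ) (φ₀ : ℝ) (hφ₀ : 0 < φ₀)
    (hderiv : ∀ s ∈ Set.Ici (0:ℝ), HasDerivWithinAt φ (φ' s) (Set.Ici 0) s)
    (hderivcont : ContinuousOn φ' (Set.Ici 0))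
    (hlow : ∀ s ∈ Set.Ici (0:ℝ), φ₀ ≤ φ s)
    (hneg : ∀ s ∈ Set.Ici (0:ℝ), φ' s ≤ 0)
    (Φ : ℝ → ℝ) (hΦ : ∀ s : ℝ, Φ s = ∫ τ in (0:ℝ)..s, φ τ) :
    ∀ (s b : ℝ), 0 < b →
      (Φ (s ^ 2 / 2) + (((N : ℝ) - 2) * φ₀ / (2 * (N : ℝ))) * b ^ 2 ≤
        Φ ((s ^ 2 + b ^ 2) / 2) - (1 / (N : ℝ)) * φ ((s ^ 2 + b ^ 2) / 2) * b ^ 2) ∧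
      Φ (s ^ 2 / 2) <
        Φ ((s ^ 2 + b ^ 2) / 2) - (1 / (N : ℝ)) * φ ((s ^ 2 + b ^ 2) / 2) * b ^ 2 := by
  have hcont : ContinuousOn φ (Ici 0) := fun x hx => (hderiv x hx).continuousWithinAt
  have hanti : AntitoneOn φ (Ici 0) := by
    apply antitoneOn_of_deriv_nonpos (convex_Ici 0) hcont
    · intro x hx
      rw [interior_Ici] at hx
      exact (((hderiv x (mem_Ici.mpr (mem_Ioi.mp hx).le)).hasDerivAt
        (Ici_mem_nhds hx)).differentiableAt).differentiableWithinAt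
    · intro x hx
      rw [interior_Ici] at hx
      rw [((hderiv x (mem_Ici.mpr (mem_Ioi.mp hx).le)).hasDerivAt (Ici_mem_nhds hx)).deriv]
      exact hneg x (mem_Ici.mpr (mem_Ioi.mp hx).le)
  intro s b hb
  set a := s ^ 2 / 2 with ha_def
  set c := (s ^ 2 + b ^ 2) / 2 with hc_def
  have ha0 : (0:ℝ) ≤ a := by positivity
  have hac : a ≤ c := by nlinarith [sq_nonneg b]
  have hc0 : (0:ℝ) ≤ c := le_trans ha0 hac
  have hca : c - a = b ^ 2 / 2 := by rw [ha_def, hc_def]; ring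
  have hint1 : IntervalIntegrable φ MeasureTheory.volume 0 a := by
    apply ContinuousOn.intervalIntegrable
    rw [uIcc_of_le ha0]
    exact hcont.mono (Icc_subset_Ici_self)
  have hint2 : IntervalIntegrable φ MeasureTheory.volume a c := by
    apply ContinuousOn.intervalIntegrable
    rw [uIcc_of_le hac]
    exact hcont.mono (fun x hx => le_trans ha0 hx.1)
  have hsplit : Φ c - Φ a = ∫ τ in a..c, φ τ := by
    rw [hΦ, hΦ, ← intervalIntegral.integral_add_adjacent_intervals hint1 hint2]
    ring
  have hconst : IntervalIntegrable (fun _ : ℝ => φ c) MeasureTheory.volume a c :=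
    intervalIntegrable_const
  have hmono : (∫ τ in a..c, (fun _ : ℝ => φ c) τ) ≤ ∫ τ in a..c, φ τ := by
    apply intervalIntegral.integral_mono_on hac hconst hint2
    intro x hx
    exact hanti (le_trans ha0 hx.1) hc0 hx.2
  rw [intervalIntegral.integral_const, smul_eq_mul, hca] at hmono
  have hφc : φ₀ ≤ φ c := hlow c hc0
  have hN3 : (3:ℝ) ≤ (N:ℝ) := by exact_mod_cast hN
  have hNpos : (0:ℝ) < (N:ℝ) := by linarith
  have hb2 : (0:ℝ) < b ^ 2 := by positivity
  have key : Φ a + (((N : ℝ) - 2) * φ₀ / (2 * (N : ℝ))) * b ^ 2 ≤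
      Φ c - (1 / (N : ℝ)) * φ c * b ^ 2 := by
    have h1 : Φ c - Φ a ≥ b ^ 2 / 2 * φ c := by linarith [hmono, hsplit.ge, hsplit.le]
    have h2 : (((N : ℝ) - 2) / (2 * (N : ℝ))) * φ₀ ≤ (((N : ℝ) - 2) / (2 * (N : ℝ))) * φ c := by
      apply mul_le_mul_of_nonneg_left hφc
      apply div_nonneg (by linarith) (by linarith)
    have h3 : b ^ 2 / 2 * φ c - (1 / (N : ℝ)) * φ c * b ^ 2
        = (((N : ℝ) - 2) / (2 * (N : ℝ))) * φ c * b ^ 2 := by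
      field_simp
    have h4 : ((N : ℝ) - 2) * φ₀ / (2 * (N : ℝ)) = (((N : ℝ) - 2) / (2 * (N : ℝ))) * φ₀ := by
      ring
    nlinarith [mul_le_mul_of_nonneg_right h2 hb2.le]
  refine ⟨key, lt_of_lt_of_le ?_ key⟩
  have : 0 < (((N : ℝ) - 2) * φ₀ / (2 * (N : ℝ))) * b ^ 2 := by
    apply mul_pos _ hb2
    apply div_pos (mul_pos (by linarith) hφ₀) (by linarith)
  linarith
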